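/- Fix d ≥ 1 and strictly positive reals Φ_0, Φ_1, …, Φ_d, and define the kernel k₀ on {0,1}^d by k₀(x, y) = Σ_{T ⊆ Fin d} Φ_{|T|} · w_T(x) · w_T(y). Let H be a subgroup of Perm(Fin d), acting on {0,1}^d by coordinate permutation, and define k(x, y) = (1/|H|²) Σ_{σ₁ ∈ H} Σ_{σ₂ ∈ H} k₀(x ∘ σ₁, y ∘ σ₂). Then for all x, y ∈ {0,1}^d: k(x, y) = (k(x, x) + k(y, y))/2 if and only if there exists σ ∈ H with x ∘ σ = y. -/

import Mathlib

open scoped Classical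

/-- The Walsh function `w_T` on the Boolean cube `{0,1}^d`. -/
def walsh {d : ℕ} (T : Finset (Fin d)) (x : Fin d → ZMod 2) : ℝ :=
  (-1 : ℝ) ^ (T.filter (fun t => x t = 1)).card


lemma walsh_eq_prod {d : ℕ} (T : Finset (Fin d)) (x : Fin d → ZMod 2) :
    walsh T x = ∏ t ∈ T, (-1 : ℝ) ^ (x t).val := by
  rw [walsh, Finset.prod_pow_eq_pow_sum, Finset.card_filter]
  congr 1
  refine Finset.sum_congr rfl fun t _ => ?_
  have : ∀ a : ZMod 2, (if a = 1 then 1 else 0) = a.val := by decide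
  exact this (x t)

lemma neg_one_pow_val_add (a b : ZMod 2) :
    ((-1:ℝ)) ^ (a+b).val = (-1:ℝ)^a.val * (-1:ℝ)^b.val := by
  rw [ZMod.val_add, ← pow_add, neg_one_pow_eq_pow_mod_two,
    Nat.mod_mod_of_dvd _ dvd_rfl, ← neg_one_pow_eq_pow_mod_two]

lemma walsh_mul {d : ℕ} (T : Finset (Fin d)) (x y : Fin d → ZMod 2) :
    walsh T x * walsh T y = walsh T (x + y) := by
  rw [walsh_eq_prod, walsh_eq_prod, walsh_eq_prod, ← Finset.prod_mul_distrib]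
  refine Finset.prod_congr rfl fun t _ => ?_
  rw [Pi.add_apply, neg_one_pow_val_add]

lemma sum_walsh {d : ℕ} (z : Fin d → ZMod 2) :
    ∑ T : Finset (Fin d), walsh T z = if z = 0 then (2:ℝ)^d else 0 := by
  have h1 : ∏ i : Fin d, ((-1:ℝ)^(z i).val + 1) = ∑ T : Finset (Fin d), walsh T z := by
    rw [Finset.prod_add, Finset.powerset_univ]
    refine Finset.sum_congr rfl fun T _ => ?_
    rw [walsh_eq_prod]; simp
  rw [← h1]
  by_cases hz : z = 0
  · subst hz
    simp [Finset.prod_const]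
    norm_num
  · obtain ⟨i, hi⟩ : ∃ i, z i ≠ 0 := by
      by_contra h; push_neg at h; exact hz (funext fun i => h i)
    have h1' : z i = 1 := by
      have : ∀ a : ZMod 2, a ≠ 0 → a = 1 := by decide
      exact this _ hi
    rw [if_neg hz]
    apply Finset.prod_eq_zero (Finset.mem_univ i)
    rw [h1', show ((1:ZMod 2)).val = 1 from rfl]
    norm_num

/-- For the `H`-invariant version `k` of a `Φ`-kernel `k₀` with strictly
positive coefficients `Φ_0, …, Φ_d`, the equality
`k(x, y) = (k(x, x) + k(y, y))/2` holds iff `x` and `y` are `H`-equivalent,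
i.e. some `σ ∈ H` maps `x` to `y` by permuting coordinates. -/
theorem stmt15 (d : ℕ) (hd : 1 ≤ d) (Φ : ℕ → ℝ) (hΦ : ∀ j ≤ d, 0 < Φ j)
    (H : Subgroup (Equiv.Perm (Fin d))) (x y : Fin d → ZMod 2) :
    let k₀ : (Fin d → ZMod 2) → (Fin d → ZMod 2) → ℝ := fun x y =>
      ∑ T : Finset (Fin d), Φ T.card * walsh T x * walsh T y
    let k : (Fin d → ZMod 2) → (Fin d → ZMod 2) → ℝ := fun x y =>
      (1 / (Fintype.card H : ℝ) ^ 2) *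
        ∑ σ₁ : H, ∑ σ₂ : H,
          k₀ (x ∘ ⇑(σ₁ : Equiv.Perm (Fin d))) (y ∘ ⇑(σ₂ : Equiv.Perm (Fin d)))
    (k x y = (k x x + k y y) / 2 ↔ ∃ σ ∈ H, x ∘ ⇑σ = y) := by
  intro k₀ k
  set c : ℕ := Fintype.card H with hc
  have hcpos : (0:ℝ) < (c:ℝ) := by
    have : 0 < c := Fintype.card_pos
    exact_mod_cast this
  set S : Finset (Fin d) → (Fin d → ZMod 2) → ℝ :=
    fun T u => ∑ σ : H, walsh T (u ∘ ⇑(σ : Equiv.Perm (Fin d))) with hS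
  -- Step A: rewrite k in diagonal form
  have hk : ∀ u v, k u v = (1/(c:ℝ)^2) * ∑ T : Finset (Fin d), Φ T.card * (S T u * S T v) := by
    intro u v
    show (1 / (c : ℝ) ^ 2) * ∑ σ₁ : H, ∑ σ₂ : H,
        (∑ T : Finset (Fin d), Φ T.card * walsh T (u ∘ ⇑(σ₁ : Equiv.Perm (Fin d)))
          * walsh T (v ∘ ⇑(σ₂ : Equiv.Perm (Fin d)))) = _
    congr 1
    have hterm : ∀ T : Finset (Fin d), Φ T.card * (S T u * S T v)
        = ∑ σ₁ : H, ∑ σ₂ : H, Φ T.card * walsh T (u ∘ ⇑(σ₁ : Equiv.Perm (Fin d)))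
            * walsh T (v ∘ ⇑(σ₂ : Equiv.Perm (Fin d))) := by
      intro T
      rw [hS]
      rw [Finset.sum_mul_sum, Finset.mul_sum]
      refine Finset.sum_congr rfl fun σ₁ _ => ?_
      rw [Finset.mul_sum]
      refine Finset.sum_congr rfl fun σ₂ _ => by ring
    calc ∑ σ₁ : H, ∑ σ₂ : H, ∑ T : Finset (Fin d),
            Φ T.card * walsh T (u ∘ ⇑(σ₁ : Equiv.Perm (Fin d)))
              * walsh T (v ∘ ⇑(σ₂ : Equiv.Perm (Fin d)))
        = ∑ σ₁ : H, ∑ T : Finset (Fin d), ∑ σ₂ : H,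
            Φ T.card * walsh T (u ∘ ⇑(σ₁ : Equiv.Perm (Fin d)))
              * walsh T (v ∘ ⇑(σ₂ : Equiv.Perm (Fin d))) :=
          Finset.sum_congr rfl fun _ _ => Finset.sum_comm
      _ = ∑ T : Finset (Fin d), ∑ σ₁ : H, ∑ σ₂ : H,
            Φ T.card * walsh T (u ∘ ⇑(σ₁ : Equiv.Perm (Fin d)))
              * walsh T (v ∘ ⇑(σ₂ : Equiv.Perm (Fin d))) := Finset.sum_comm
      _ = ∑ T : Finset (Fin d), Φ T.card * (S T u * S T v) :=
          Finset.sum_congr rfl fun T _ => (hterm T).symm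
  -- Step B: energy identity
  have hE : ∑ T : Finset (Fin d), Φ T.card * (S T x - S T y)^2
      = (c:ℝ)^2 * (k x x + k y y - 2 * k x y) := by
    have expand : ∑ T : Finset (Fin d), Φ T.card * (S T x - S T y)^2
        = (∑ T : Finset (Fin d), Φ T.card * (S T x * S T x))
          + (∑ T : Finset (Fin d), Φ T.card * (S T y * S T y))
          - 2 * ∑ T : Finset (Fin d), Φ T.card * (S T x * S T y) := by
      rw [Finset.mul_sum, ← Finset.sum_add_distrib, ← Finset.sum_sub_distrib]
      refine Finset.sum_congr rfl fun T _ => by ring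
    rw [expand, hk x x, hk y y, hk x y]
    field_simp
  -- Step C: the equality is equivalent to all S agreeing
  have key : k x y = (k x x + k y y) / 2 ↔ ∀ T : Finset (Fin d), S T x = S T y := by
    constructor
    · intro h
      have h0 : ∑ T : Finset (Fin d), Φ T.card * (S T x - S T y)^2 = 0 := by
        rw [hE, h]; ring
      intro T
      have hnn : ∀ T ∈ (Finset.univ : Finset (Finset (Fin d))),
          (0:ℝ) ≤ Φ T.card * (S T x - S T y)^2 := by
        intro T _
        have hΦT : 0 < Φ T.card := hΦ T.card (by
          simpa using (Finset.card_le_univ T).trans_eq (by simp))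
        positivity
      have := (Finset.sum_eq_zero_iff_of_nonneg hnn).mp h0 T (Finset.mem_univ T)
      have hΦT : 0 < Φ T.card := hΦ T.card (by
        simpa using (Finset.card_le_univ T).trans_eq (by simp))
      have hsq : (S T x - S T y)^2 = 0 := by
        rcases mul_eq_zero.mp this with h' | h'
        · exact absurd h' hΦT.ne'
        · exact h'
      have := pow_eq_zero_iff (n := 2) (by norm_num) |>.mp hsq
      linarith [sub_eq_zero.mp this]
    · intro h
      have h0 : ∑ T : Finset (Fin d), Φ T.card * (S T x - S T y)^2 = 0 := by
        refine Finset.sum_eq_zero fun T _ => ?_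
        rw [h T]; ring
      rw [h0] at hE
      have hc2 : ((c:ℝ)^2) ≠ 0 := by positivity
      have := (mul_eq_zero.mp hE.symm).resolve_left hc2
      linarith
  rw [key]
  -- Step D: S agree for all T iff x, y are H-equivalent
  have addzero : ∀ w v : Fin d → ZMod 2, w + v = 0 ↔ w = v := by
    intro w v
    constructor
    · intro h; funext i
      have h2 : ∀ a b : ZMod 2, a + b = 0 → a = b := by decide
      exact h2 _ _ (congrFun h i)
    · intro h; subst h; funext i
      have h2 : ∀ a : ZMod 2, a + a = 0 := by decide
      exact h2 _
  have hSw : ∀ u v : Fin d → ZMod 2, ∑ T : Finset (Fin d), S T u * walsh T v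
      = (2:ℝ)^d * ∑ σ : H, (if u ∘ ⇑(σ : Equiv.Perm (Fin d)) = v then (1:ℝ) else 0) := by
    intro u v
    rw [hS]
    calc ∑ T : Finset (Fin d), (∑ σ : H, walsh T (u ∘ ⇑(σ : Equiv.Perm (Fin d)))) * walsh T v
        = ∑ T : Finset (Fin d), ∑ σ : H,
            walsh T (u ∘ ⇑(σ : Equiv.Perm (Fin d)) + v) := by
          refine Finset.sum_congr rfl fun T _ => ?_
          rw [Finset.sum_mul]
          exact Finset.sum_congr rfl fun σ _ => walsh_mul _ _ _
      _ = ∑ σ : H, ∑ T : Finset (Fin d),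
            walsh T (u ∘ ⇑(σ : Equiv.Perm (Fin d)) + v) := Finset.sum_comm
      _ = ∑ σ : H, (if u ∘ ⇑(σ : Equiv.Perm (Fin d)) = v then (2:ℝ)^d else 0) := by
          refine Finset.sum_congr rfl fun σ _ => ?_
          rw [sum_walsh]
          simp [addzero]
      _ = (2:ℝ)^d * ∑ σ : H, (if u ∘ ⇑(σ : Equiv.Perm (Fin d)) = v then (1:ℝ) else 0) := by
          rw [Finset.mul_sum]
          exact Finset.sum_congr rfl fun σ _ => by split <;> simp
  constructor
  · intro hall
    have h1 : (2:ℝ)^d * ∑ σ : H, (if x ∘ ⇑(σ : Equiv.Perm (Fin d)) = y then (1:ℝ) else 0)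
        = (2:ℝ)^d * ∑ σ : H, (if y ∘ ⇑(σ : Equiv.Perm (Fin d)) = y then (1:ℝ) else 0) := by
      rw [← hSw x y, ← hSw y y]
      exact Finset.sum_congr rfl fun T _ => by rw [hall T]
    have h2pos : ((2:ℝ)^d) ≠ 0 := by positivity
    have h2 : ∑ σ : H, (if x ∘ ⇑(σ : Equiv.Perm (Fin d)) = y then (1:ℝ) else 0)
        = ∑ σ : H, (if y ∘ ⇑(σ : Equiv.Perm (Fin d)) = y then (1:ℝ) else 0) :=
      mul_left_cancel₀ h2pos h1
    have hpos : (0:ℝ) < ∑ σ : H, (if y ∘ ⇑(σ : Equiv.Perm (Fin d)) = y then (1:ℝ) else 0) := by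
      have hone : (if y ∘ ⇑(((1:H) : Equiv.Perm (Fin d))) = y then (1:ℝ) else 0) = 1 := by
        rw [if_pos]
        simp
      calc (0:ℝ) < 1 := one_pos
        _ = _ := hone.symm
        _ ≤ _ := Finset.single_le_sum (f := fun σ : H =>
              (if y ∘ ⇑((σ : Equiv.Perm (Fin d))) = y then (1:ℝ) else 0))
            (fun σ _ => by split <;> norm_num) (Finset.mem_univ (1:H))
    rw [← h2] at hpos
    by_contra hno
    push_neg at hno
    have : ∑ σ : H, (if x ∘ ⇑(σ : Equiv.Perm (Fin d)) = y then (1:ℝ) else 0) = 0 := by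
      refine Finset.sum_eq_zero fun σ _ => ?_
      rw [if_neg (hno (σ : Equiv.Perm (Fin d)) σ.2)]
    rw [this] at hpos
    exact absurd hpos (lt_irrefl 0)
  · rintro ⟨σ₀, hσ₀H, hσ₀⟩ T
    rw [hS]
    refine Fintype.sum_equiv (Equiv.mulLeft ((⟨σ₀, hσ₀H⟩ : H))⁻¹)
      (fun σ : H => walsh T (x ∘ ⇑((σ : Equiv.Perm (Fin d)))))
      (fun σ : H => walsh T (y ∘ ⇑((σ : Equiv.Perm (Fin d))))) fun σ => ?_
    rw [← hσ₀]
    congr 1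
    funext i
    simp [Function.comp, Equiv.Perm.mul_apply]
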